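/- Let T, T′ ⊂ ℝⁿ with |T| = |T′| = 3 and |T ∩ T′| = 2, and let s ∈ T \ T′, s′ ∈ T′ \ T. If V_T({s}) ⊆ V_{T′}({s′}), then all points of T ∪ T′ lie on a common straight line. -/

import Mathlib

open Finset Metric
open scoped Classical RealInnerProductSpace

/-- The multipoint (higher-order) Voronoi cell of `S` within the set of sites `T`. -/
def vcell {n : ℕ} (T S : Finset (EuclideanSpace ℝ (Fin n))) :
    Set (EuclideanSpace ℝ (Fin n)) :=
  {x | ∀ s ∈ S, ∀ t ∈ T \ S, dist x s ≤ dist x t}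

private lemma nonpos_of_forall_mul_le (c K : ℝ) (h : ∀ t : ℝ, 0 ≤ t → t * c ≤ K) :
    c ≤ 0 := by
  by_contra hc
  push_neg at hc
  have ht : (0:ℝ) ≤ (|K| + 1) / c := by positivity
  have h2 := h _ ht
  rw [div_mul_cancel₀ _ (ne_of_gt hc)] at h2
  linarith [le_abs_self K]

private lemma norm_le_norm_iff_inner {E : Type*} [NormedAddCommGroup E]
    [InnerProductSpace ℝ E] (y u : E) :
    ‖y‖ ≤ ‖y - u‖ ↔ 2 * ⟪y, u⟫ ≤ ‖u‖ ^ 2 := by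
  have hexp : ‖y - u‖ ^ 2 = ‖y‖ ^ 2 - 2 * ⟪y, u⟫ + ‖u‖ ^ 2 := norm_sub_sq_real y u
  constructor
  · intro h
    nlinarith [norm_nonneg y, norm_nonneg (y - u)]
  · intro h
    nlinarith [norm_nonneg y, norm_nonneg (y - u)]

private lemma key_lemma {E : Type*} [NormedAddCommGroup E] [InnerProductSpace ℝ E]
    [FiniteDimensional ℝ E] (u v w : E) (hu : u ≠ 0) (hv : v ≠ 0) (hw : w ≠ 0)
    (H : ∀ y : E, 2 * ⟪y, u⟫ ≤ ‖u‖ ^ 2 → 2 * ⟪y, v⟫ ≤ ‖v‖ ^ 2 →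
      2 * ⟪y, u - w⟫ ≤ ‖u‖ ^ 2 - ‖w‖ ^ 2 ∧ 2 * ⟪y, v - w⟫ ≤ ‖v‖ ^ 2 - ‖w‖ ^ 2) :
    ∃ c e : ℝ, v = c • u ∧ w = e • u := by
  -- the recession-cone condition
  have Hc : ∀ z : E, ⟪z, u⟫ ≤ 0 → ⟪z, v⟫ ≤ 0 → ⟪z, u - w⟫ ≤ 0 ∧ ⟪z, v - w⟫ ≤ 0 := by
    intro z hzu hzv
    have hfeas : ∀ t : ℝ, 0 ≤ t →
        2 * ⟪t • z, u⟫ ≤ ‖u‖ ^ 2 ∧ 2 * ⟪t • z, v⟫ ≤ ‖v‖ ^ 2 := by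
      intro t ht
      rw [real_inner_smul_left, real_inner_smul_left]
      constructor
      · nlinarith [sq_nonneg ‖u‖]
      · nlinarith [sq_nonneg ‖v‖]
    constructor
    · apply nonpos_of_forall_mul_le _ ((‖u‖ ^ 2 - ‖w‖ ^ 2) / 2)
      intro t ht
      have h2 := (H (t • z) (hfeas t ht).1 (hfeas t ht).2).1
      rw [real_inner_smul_left] at h2
      linarith
    · apply nonpos_of_forall_mul_le _ ((‖v‖ ^ 2 - ‖w‖ ^ 2) / 2)
      intro t ht
      have h2 := (H (t • z) (hfeas t ht).1 (hfeas t ht).2).2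
      rw [real_inner_smul_left] at h2
      linarith
  -- w lies in the span of u and v
  have hwspan : w ∈ Submodule.span ℝ ({u, v} : Set E) := by
    rw [← Submodule.orthogonal_orthogonal (Submodule.span ℝ ({u, v} : Set E)),
      Submodule.mem_orthogonal]
    intro z hz
    have hz' := (Submodule.mem_orthogonal _ _).mp hz
    have hzu : ⟪z, u⟫ = 0 := by
      rw [real_inner_comm]; exact hz' u (Submodule.subset_span (by simp))
    have hzv : ⟪z, v⟫ = 0 := by
      rw [real_inner_comm]; exact hz' v (Submodule.subset_span (by simp))
    have h1 := (Hc z hzu.le hzv.le).1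
    have h2 := (Hc (-z) (by rw [inner_neg_left, hzu]; simp)
      (by rw [inner_neg_left, hzv]; simp)).1
    rw [inner_neg_left] at h2
    rw [inner_sub_right] at h1 h2
    linarith
  obtain ⟨lam, mu, hlm⟩ := Submodule.mem_span_pair.mp hwspan
  by_cases hdep : ∃ c : ℝ, v = c • u
  · obtain ⟨c, hc⟩ := hdep
    refine ⟨c, lam + mu * c, hc, ?_⟩
    rw [← hlm, hc]
    module
  · exfalso
    push_neg at hdep
    set A := ‖u‖ ^ 2 with hA
    set B := ⟪u, v⟫ with hB
    set C := ‖v‖ ^ 2 with hC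
    have hA0 : 0 < A := pow_pos (norm_pos_iff.mpr hu) 2
    have hC0 : 0 < C := pow_pos (norm_pos_iff.mpr hv) 2
    have hAi : ⟪u, u⟫ = A := real_inner_self_eq_norm_sq u
    have hCi : ⟪v, v⟫ = C := real_inner_self_eq_norm_sq v
    have hvu : ⟪v, u⟫ = B := by rw [real_inner_comm, ← hB]
    -- the vector z₀ = v - (B/A) • u
    set z₀ : E := v - (B / A) • u with hz₀
    have hz₀u : ⟪z₀, u⟫ = 0 := by
      rw [hz₀, inner_sub_left, real_inner_smul_left, hvu, hAi]
      field_simp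
      ring
    have hz₀ne : z₀ ≠ 0 := by
      intro h0
      exact hdep (B / A) (by rw [← sub_eq_zero]; exact h0)
    have hz₀v : 0 < ⟪z₀, v⟫ := by
      have hpos : 0 < ⟪z₀, z₀⟫ := by
        rw [real_inner_self_eq_norm_sq]
        exact pow_pos (norm_pos_iff.mpr hz₀ne) 2
      have he : ⟪z₀, z₀⟫ = ⟪z₀, v⟫ - B / A * ⟪z₀, u⟫ := by
        nth_rewrite 2 [hz₀]
        rw [inner_sub_right, real_inner_smul_right]
      rw [he, hz₀u] at hpos
      linarith
    -- the vector z₁ = u - (B/C) • v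
    set z₁ : E := u - (B / C) • v with hz₁
    have hz₁v : ⟪z₁, v⟫ = 0 := by
      rw [hz₁, inner_sub_left, real_inner_smul_left, hCi]
      field_simp
      linarith [hB]
    have hz₁ne : z₁ ≠ 0 := by
      intro h0
      rw [sub_eq_zero] at h0
      by_cases hB0 : B = 0
      · rw [hB0] at h0; simp at h0; exact hu h0
      · refine hdep (C / B) ?_
        rw [h0, smul_smul]
        field_simp
        simp
    have hz₁u : 0 < ⟪z₁, u⟫ := by
      have hpos : 0 < ⟪z₁, z₁⟫ := by
        rw [real_inner_self_eq_norm_sq]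
        exact pow_pos (norm_pos_iff.mpr hz₁ne) 2
      have he : ⟪z₁, z₁⟫ = ⟪z₁, u⟫ - B / C * ⟪z₁, v⟫ := by
        nth_rewrite 2 [hz₁]
        rw [inner_sub_right, real_inner_smul_right]
      rw [he, hz₁v] at hpos
      linarith
    -- the coefficients of w are nonpositive
    have hwz₀ : ⟪z₀, w⟫ = mu * ⟪z₀, v⟫ := by
      rw [← hlm, inner_add_right, real_inner_smul_right, real_inner_smul_right, hz₀u]
      ring
    have hwz₁ : ⟪z₁, w⟫ = lam * ⟪z₁, u⟫ := by
      rw [← hlm, inner_add_right, real_inner_smul_right, real_inner_smul_right, hz₁v]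
      ring
    have hmu : mu ≤ 0 := by
      have h2 := (Hc (-z₀) (by rw [inner_neg_left, hz₀u]; simp)
        (by rw [inner_neg_left]; linarith)).1
      rw [inner_neg_left, inner_sub_right, hz₀u, hwz₀] at h2
      nlinarith
    have hlam : lam ≤ 0 := by
      have h2 := (Hc (-z₁) (by rw [inner_neg_left]; linarith)
        (by rw [inner_neg_left, hz₁v]; simp)).2
      rw [inner_neg_left, inner_sub_right, hz₁v, hwz₁] at h2
      nlinarith
    -- the point y on both bisector hyperplanes
    have hD : 0 < A * C - B ^ 2 := by
      have he : ⟪z₀, v⟫ = C - B / A * B := by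
        rw [hz₀, inner_sub_left, real_inner_smul_left, hCi, ← hB]
      have h5 : 0 < C - B / A * B := he ▸ hz₀v
      have hcancel : A * (C - B / A * B) = A * C - B ^ 2 := by
        field_simp
      have := mul_pos hA0 h5
      linarith [hcancel ▸ this]
    set D : ℝ := A * C - B ^ 2 with hDdef
    set p : ℝ := C * (A - B) / (2 * D) with hp
    set q : ℝ := A * (C - B) / (2 * D) with hq
    set y : E := p • u + q • v with hy
    have hyuv : ⟪y, u⟫ = p * A + q * B ∧ ⟪y, v⟫ = p * B + q * C := by
      constructor
      · rw [hy, inner_add_left, real_inner_smul_left, real_inner_smul_left, hAi, hvu]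
      · rw [hy, inner_add_left, real_inner_smul_left, real_inner_smul_left, hCi, hB]
    have hyu : 2 * ⟪y, u⟫ = A := by
      rw [hyuv.1, hp, hq]
      field_simp
      ring
    have hyv : 2 * ⟪y, v⟫ = C := by
      rw [hyuv.2, hp, hq]
      field_simp
      ring
    have hW : 0 < ‖w‖ ^ 2 := pow_pos (norm_pos_iff.mpr hw) 2
    have hyw : 2 * ⟪y, w⟫ = lam * A + mu * C := by
      rw [← hlm, inner_add_right, real_inner_smul_right, real_inner_smul_right]
      have h1 : ⟪y, u⟫ = A / 2 := by linarith
      have h2 : ⟪y, v⟫ = C / 2 := by linarith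
      rw [h1, h2]
      ring
    have hfin := (H y hyu.le hyv.le).1
    rw [inner_sub_right] at hfin
    nlinarith [mul_nonneg (neg_nonneg.mpr hlam) hA0.le, mul_nonneg (neg_nonneg.mpr hmu) hC0.le]

theorem stmt_14 {n : ℕ} (T T' : Finset (EuclideanSpace ℝ (Fin n)))
    (hT : T.card = 3) (hT' : T'.card = 3) (hTT' : (T ∩ T').card = 2)
    (s s' : EuclideanSpace ℝ (Fin n)) (hs : s ∈ T \ T') (hs' : s' ∈ T' \ T)
    (hsub : vcell T {s} ⊆ vcell T' {s'}) :
    Collinear ℝ (↑(T ∪ T') : Set (EuclideanSpace ℝ (Fin n))) := by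
  obtain ⟨a, b, hab, hab_eq⟩ := Finset.card_eq_two.mp hTT'
  rw [Finset.mem_sdiff] at hs hs'
  obtain ⟨hsT, hsT'⟩ := hs
  obtain ⟨hs'T', hs'T⟩ := hs'
  have ha : a ∈ T ∩ T' := hab_eq ▸ (by simp)
  have hb : b ∈ T ∩ T' := hab_eq ▸ (by simp)
  rw [Finset.mem_inter] at ha hb
  have hsa : s ≠ a := fun h => hsT' (h ▸ ha.2)
  have hsb : s ≠ b := fun h => hsT' (h ▸ hb.2)
  have hs'a : s' ≠ a := fun h => hs'T (h ▸ ha.1)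
  have hs'b : s' ≠ b := fun h => hs'T (h ▸ hb.1)
  have hss' : s ≠ s' := fun h => hsT' (h ▸ hs'T')
  -- identify T and T'
  have hTeq : T = {s, a, b} := by
    refine (Finset.eq_of_subset_of_card_le ?_ ?_).symm
    · intro x hx
      simp only [Finset.mem_insert, Finset.mem_singleton] at hx
      rcases hx with rfl | rfl | rfl
      exacts [hsT, ha.1, hb.1]
    · rw [hT]
      rw [Finset.card_insert_of_notMem (by simp [hsa, hsb]),
        Finset.card_insert_of_notMem (by simp [hab]), Finset.card_singleton]
  have hT'eq : T' = {s', a, b} := by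
    refine (Finset.eq_of_subset_of_card_le ?_ ?_).symm
    · intro x hx
      simp only [Finset.mem_insert, Finset.mem_singleton] at hx
      rcases hx with rfl | rfl | rfl
      exacts [hs'T', ha.2, hb.2]
    · rw [hT']
      rw [Finset.card_insert_of_notMem (by simp [hs'a, hs'b]),
        Finset.card_insert_of_notMem (by simp [hab]), Finset.card_singleton]
  have hTd : T \ {s} = {a, b} := by
    rw [hTeq]
    ext x
    simp only [Finset.mem_sdiff, Finset.mem_insert, Finset.mem_singleton]
    constructor
    · rintro ⟨h1 | h1 | h1, h2⟩ <;> tauto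
    · rintro (rfl | rfl)
      · exact ⟨Or.inr (Or.inl rfl), fun h => hsa h.symm⟩
      · exact ⟨Or.inr (Or.inr rfl), fun h => hsb h.symm⟩
  have hT'd : T' \ {s'} = {a, b} := by
    rw [hT'eq]
    ext x
    simp only [Finset.mem_sdiff, Finset.mem_insert, Finset.mem_singleton]
    constructor
    · rintro ⟨h1 | h1 | h1, h2⟩ <;> tauto
    · rintro (rfl | rfl)
      · exact ⟨Or.inr (Or.inl rfl), fun h => hs'a h.symm⟩
      · exact ⟨Or.inr (Or.inr rfl), fun h => hs'b h.symm⟩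
  have hmem : ∀ x, x ∈ vcell T {s} ↔ dist x s ≤ dist x a ∧ dist x s ≤ dist x b := by
    intro x
    simp [vcell, hTd]
  have hmem' : ∀ x, x ∈ vcell T' {s'} ↔ dist x s' ≤ dist x a ∧ dist x s' ≤ dist x b := by
    intro x
    simp [vcell, hT'd]
  set u := a - s with hudef
  set v := b - s with hvdef
  set w := s' - s with hwdef
  have hu : u ≠ 0 := fun h => hsa (sub_eq_zero.mp h).symm
  have hv : v ≠ 0 := fun h => hsb (sub_eq_zero.mp h).symm
  have hw : w ≠ 0 := fun h => hss' (sub_eq_zero.mp h).symm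
  have conv2 : ∀ (y c d : EuclideanSpace ℝ (Fin n)), ‖y - c‖ ≤ ‖y - d‖ →
      2 * ⟪y, d - c⟫ ≤ ‖d‖ ^ 2 - ‖c‖ ^ 2 := by
    intro y c d h
    have h2 : ‖y - c‖ ^ 2 ≤ ‖y - d‖ ^ 2 := by
      nlinarith [norm_nonneg (y - c), norm_nonneg (y - d)]
    rw [norm_sub_sq_real, norm_sub_sq_real] at h2
    rw [inner_sub_right]
    linarith
  have H : ∀ y : EuclideanSpace ℝ (Fin n), 2 * ⟪y, u⟫ ≤ ‖u‖ ^ 2 → 2 * ⟪y, v⟫ ≤ ‖v‖ ^ 2 →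
      2 * ⟪y, u - w⟫ ≤ ‖u‖ ^ 2 - ‖w‖ ^ 2 ∧ 2 * ⟪y, v - w⟫ ≤ ‖v‖ ^ 2 - ‖w‖ ^ 2 := by
    intro y h1 h2
    set x : EuclideanSpace ℝ (Fin n) := y + s with hx
    have hxs : dist x s = ‖y‖ := by rw [dist_eq_norm]; congr 1; rw [hx]; abel
    have hxa : dist x a = ‖y - u‖ := by rw [dist_eq_norm]; congr 1; rw [hx, hudef]; abel
    have hxb : dist x b = ‖y - v‖ := by rw [dist_eq_norm]; congr 1; rw [hx, hvdef]; abel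
    have hxs' : dist x s' = ‖y - w‖ := by rw [dist_eq_norm]; congr 1; rw [hx, hwdef]; abel
    have hxmem : x ∈ vcell T {s} := by
      rw [hmem x, hxs, hxa, hxb, norm_le_norm_iff_inner, norm_le_norm_iff_inner]
      exact ⟨h1, h2⟩
    have hx' := (hmem' x).mp (hsub hxmem)
    rw [hxs', hxa, hxb] at hx'
    exact ⟨conv2 y w u hx'.1, conv2 y w v hx'.2⟩
  obtain ⟨c, e, hc, he⟩ := key_lemma u v w hu hv hw H
  have hcols : Collinear ℝ ({s, a, b, s'} : Set (EuclideanSpace ℝ (Fin n))) := by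
    rw [collinear_iff_of_mem (Set.mem_insert s _)]
    refine ⟨u, ?_⟩
    intro p hp
    simp only [Set.mem_insert_iff, Set.mem_singleton_iff] at hp
    rcases hp with rfl | rfl | rfl | rfl
    · exact ⟨0, by simp⟩
    · refine ⟨1, ?_⟩
      simp only [one_smul, vadd_eq_add, hudef]
      abel
    · refine ⟨c, ?_⟩
      rw [show c • u = v from hc.symm]
      simp only [vadd_eq_add, hvdef]
      abel
    · refine ⟨e, ?_⟩
      rw [show e • u = w from he.symm]
      simp only [vadd_eq_add, hwdef]
      abel
  apply hcols.subset
  intro x hx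
  simp only [Finset.coe_union, Set.mem_union, Finset.mem_coe, hTeq, hT'eq,
    Finset.mem_insert, Finset.mem_singleton] at hx
  simp only [Set.mem_insert_iff, Set.mem_singleton_iff]
  tauto
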